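/- Pointwise bound for the short-range self-interaction velocity: Let $f : \mathbb{R}^2 \to \mathbb{R}$ be twice differentiable with bounded second derivatives. Then there is a universal constant $C$ such that for every $x \in \mathbb{R}^2$, $\int_{\{y : |y| < 1\}} \frac{|(\nabla f(x) - \nabla f(x-y)) \cdot y|}{[|y|^2 + (f(x) - f(x-y))^2]^{3/2}}\, dy \le C\, \sup_x |\nabla^2 f(x)|$. -/

import Mathlib

open MeasureTheory Filter Topology Real Set
open scoped RealInnerProductSpace ENNReal

noncomputable section

abbrev E2 := EuclideanSpace ℝ (Fin 2)

lemma E2_finrank : Module.finrank ℝ E2 = 2 := by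
  simp [finrank_euclideanSpace]

/-- Finiteness of the integral of `‖y‖⁻¹` over the unit ball in the plane. -/
lemma inv_norm_lintegral_finite :
    (∫⁻ y in Metric.ball (0 : E2) 1, ENNReal.ofReal ‖y‖⁻¹) < ⊤ := by
  set A : ℕ → Set E2 := fun n =>
    Metric.ball 0 ((2⁻¹ : ℝ) ^ n) \ Metric.ball 0 ((2⁻¹ : ℝ) ^ (n + 1)) with hA
  have hVlt : volume (Metric.ball (0 : E2) 1) < ⊤ := measure_ball_lt_top
  set V : ℝ≥0∞ := volume (Metric.ball (0 : E2) 1) with hV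
  -- inclusion of the ball in the union of annuli plus the origin
  have hsub : Metric.ball (0 : E2) 1 ⊆ {0} ∪ ⋃ n, A n := by
    intro y hy
    rcases eq_or_ne y 0 with rfl | hy0
    · exact Or.inl rfl
    · have hy1 : ‖y‖ < 1 := by simpa using hy
      have hy0' : 0 < ‖y‖ := norm_pos_iff.mpr hy0
      have hex : ∃ n, (2⁻¹ : ℝ) ^ (n + 1) ≤ ‖y‖ := by
        obtain ⟨k, hk⟩ := exists_pow_lt_of_lt_one hy0' (by norm_num : (2⁻¹ : ℝ) < 1)
        exact ⟨k, le_of_lt (lt_of_le_of_lt (pow_le_pow_of_le_one (by norm_num)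
          (by norm_num) (Nat.le_succ k)) hk)⟩
      refine Or.inr (mem_iUnion.mpr ⟨Nat.find hex, ?_, ?_⟩)
      · simp only [Metric.mem_ball, dist_zero_right]
        rcases Nat.eq_zero_or_pos (Nat.find hex) with h0 | hpos
        · rw [h0]; simpa using hy1
        · obtain ⟨m, hm⟩ := Nat.exists_eq_succ_of_ne_zero hpos.ne'
          have := Nat.find_min hex (m := m) (by omega)
          push_neg at this
          rw [hm]
          simpa using this
      · simp only [Metric.mem_ball, dist_zero_right, not_lt]
        exact Nat.find_spec hex
  -- bound over each annulus
  have hann : ∀ n, (∫⁻ y in A n, ENNReal.ofReal ‖y‖⁻¹)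
      ≤ (2 * (2⁻¹ : ℝ≥0∞) ^ n) * V := by
    intro n
    have hmeas : MeasurableSet (A n) :=
      measurableSet_ball.diff measurableSet_ball
    have hb : ∀ y ∈ A n, ENNReal.ofReal ‖y‖⁻¹ ≤ ENNReal.ofReal ((2 : ℝ) ^ (n + 1)) := by
      intro y hy
      have hge : (2⁻¹ : ℝ) ^ (n + 1) ≤ ‖y‖ := by
        have := hy.2
        simpa [Metric.mem_ball, dist_zero_right, not_lt] using this
      have hpos : (0 : ℝ) < (2⁻¹ : ℝ) ^ (n + 1) := by positivity
      apply ENNReal.ofReal_le_ofReal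
      have : ‖y‖⁻¹ ≤ ((2⁻¹ : ℝ) ^ (n + 1))⁻¹ := by
        exact inv_anti₀ hpos hge
      simpa [inv_pow] using this
    calc (∫⁻ y in A n, ENNReal.ofReal ‖y‖⁻¹)
        ≤ ∫⁻ _ in A n, ENNReal.ofReal ((2 : ℝ) ^ (n + 1)) :=
          setLIntegral_mono' hmeas hb
      _ = ENNReal.ofReal ((2 : ℝ) ^ (n + 1)) * volume (A n) := by
          rw [setLIntegral_const]
      _ ≤ ENNReal.ofReal ((2 : ℝ) ^ (n + 1)) * volume (Metric.ball (0 : E2) ((2⁻¹ : ℝ) ^ n)) := by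
          exact mul_le_mul_right (measure_mono diff_subset) _
      _ = ENNReal.ofReal ((2 : ℝ) ^ (n + 1)) *
            (ENNReal.ofReal (((2⁻¹ : ℝ) ^ n) ^ Module.finrank ℝ E2) * V) := by
          rw [Measure.addHaar_ball volume 0 (by positivity)]
      _ = (2 * (2⁻¹ : ℝ≥0∞) ^ n) * V := by
          rw [← mul_assoc, ← ENNReal.ofReal_mul (by positivity)]
          congr 1
          have hval : (2 : ℝ) ^ (n + 1) * ((2⁻¹ : ℝ) ^ n) ^ Module.finrank ℝ E2
              = 2 * (2⁻¹ : ℝ) ^ n := by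
            have h1 : (2:ℝ)^n * (2⁻¹:ℝ)^n = 1 := by
              rw [← mul_pow]; norm_num
            rw [E2_finrank, pow_succ]
            calc (2:ℝ)^n * 2 * ((2⁻¹:ℝ)^n)^2
                = 2 * ((2:ℝ)^n * (2⁻¹:ℝ)^n) * (2⁻¹:ℝ)^n := by ring
              _ = 2 * (2⁻¹:ℝ)^n := by rw [h1]; ring
          rw [hval, ENNReal.ofReal_mul (by norm_num), ENNReal.ofReal_pow (by norm_num),
            ENNReal.ofReal_inv_of_pos two_pos]
          norm_num
  -- put everything together
  have hchain : (∫⁻ y in Metric.ball (0 : E2) 1, ENNReal.ofReal ‖y‖⁻¹)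
      ≤ (∫⁻ y in ({0} : Set E2), ENNReal.ofReal ‖y‖⁻¹)
        + ∑' n, ∫⁻ y in A n, ENNReal.ofReal ‖y‖⁻¹ := by
    calc (∫⁻ y in Metric.ball (0 : E2) 1, ENNReal.ofReal ‖y‖⁻¹)
        ≤ ∫⁻ y in ({0} : Set E2) ∪ ⋃ n, A n, ENNReal.ofReal ‖y‖⁻¹ :=
          lintegral_mono_set hsub
      _ ≤ (∫⁻ y in ({0} : Set E2), ENNReal.ofReal ‖y‖⁻¹)
            + ∫⁻ y in ⋃ n, A n, ENNReal.ofReal ‖y‖⁻¹ := lintegral_union_le _ _ _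
      _ ≤ _ := by gcongr; exact lintegral_iUnion_le _ _
  have h0 : (∫⁻ y in ({0} : Set E2), ENNReal.ofReal ‖y‖⁻¹) = 0 := by
    apply setLIntegral_measure_zero
    simp
  have hsum : (∑' n, ∫⁻ y in A n, ENNReal.ofReal ‖y‖⁻¹)
      ≤ ∑' n : ℕ, (2 * (2⁻¹ : ℝ≥0∞) ^ n) * V := ENNReal.tsum_le_tsum hann
  have hgeom : (∑' n : ℕ, (2 * (2⁻¹ : ℝ≥0∞) ^ n) * V) < ⊤ := by
    have heq : (∑' n : ℕ, (2 * (2⁻¹ : ℝ≥0∞) ^ n) * V)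
        = (2 * V) * ∑' n : ℕ, (2⁻¹ : ℝ≥0∞) ^ n := by
      rw [← ENNReal.tsum_mul_left]
      exact tsum_congr fun n => by ring
    rw [heq, ENNReal.tsum_geometric]
    refine ENNReal.mul_lt_top (ENNReal.mul_lt_top (by norm_num) hVlt) ?_
    rw [ENNReal.inv_lt_top, ENNReal.one_sub_inv_two]
    exact ENNReal.inv_pos.mpr ENNReal.ofNat_ne_top
  calc (∫⁻ y in Metric.ball (0 : E2) 1, ENNReal.ofReal ‖y‖⁻¹)
      ≤ _ := hchain
    _ < ⊤ := by
        rw [h0, zero_add]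
        exact lt_of_le_of_lt hsum hgeom

/-- **Pointwise bound for the short-range self-interaction velocity.**  There is a universal
constant `C` such that for every twice differentiable `f : ℝ² → ℝ` with bounded second
derivative and every `x`,
`∫_{|y|<1} |(∇f(x)-∇f(x-y))⬝y| / [|y|²+(f(x)-f(x-y))²]^{3/2} dy ≤ C sup|∇²f|`. -/
theorem short_range_pointwise_velocity_bound :
    ∃ C : ℝ, 0 < C ∧ ∀ f : E2 → ℝ,
      Differentiable ℝ f → Differentiable ℝ (fun x => gradient f x) →
      BddAbove (Set.range fun x => ‖fderiv ℝ (fun x => gradient f x) x‖) →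
      ∀ x : E2,
        (∫⁻ y in Metric.ball (0 : E2) 1, ENNReal.ofReal
            (|⟪gradient f x - gradient f (x - y), y⟫| /
              (‖y‖ ^ 2 + (f x - f (x - y)) ^ 2) ^ (3 / 2 : ℝ))) ≤
          ENNReal.ofReal (C * ⨆ x : E2, ‖fderiv ℝ (fun x => gradient f x) x‖) := by
  set I : ℝ≥0∞ := ∫⁻ y in Metric.ball (0 : E2) 1, ENNReal.ofReal ‖y‖⁻¹ with hI
  have hIlt : I < ⊤ := inv_norm_lintegral_finite
  refine ⟨I.toReal + 1, by positivity, ?_⟩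
  intro f hf hgrad hbdd x
  set M : ℝ := ⨆ x : E2, ‖fderiv ℝ (fun x => gradient f x) x‖ with hM
  have hMle : ∀ z : E2, ‖fderiv ℝ (fun x => gradient f x) z‖ ≤ M := fun z =>
    le_ciSup hbdd z
  have hM0 : 0 ≤ M := le_trans (norm_nonneg _) (hMle x)
  -- Lipschitz bound on the gradient
  have hlip : ∀ a b : E2, ‖gradient f a - gradient f b‖ ≤ M * ‖a - b‖ := by
    intro a b
    exact Convex.norm_image_sub_le_of_norm_fderiv_le (fun z _ => (hgrad z))
      (fun z _ => hMle z) convex_univ (mem_univ b) (mem_univ a)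
  -- pointwise bound of the integrand
  have hpt : ∀ y : E2,
      |⟪gradient f x - gradient f (x - y), y⟫| /
          (‖y‖ ^ 2 + (f x - f (x - y)) ^ 2) ^ (3 / 2 : ℝ)
        ≤ M * ‖y‖⁻¹ := by
    intro y
    rcases eq_or_ne y 0 with rfl | hy0
    · simp
    · have hy : (0 : ℝ) < ‖y‖ := norm_pos_iff.mpr hy0
      have hnum : |⟪gradient f x - gradient f (x - y), y⟫| ≤ M * ‖y‖ ^ 2 := by
        calc |⟪gradient f x - gradient f (x - y), y⟫|
            ≤ ‖gradient f x - gradient f (x - y)‖ * ‖y‖ := abs_real_inner_le_norm _ _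
          _ ≤ (M * ‖y‖) * ‖y‖ := by
              apply mul_le_mul_of_nonneg_right _ (norm_nonneg y)
              have := hlip x (x - y)
              simpa [sub_sub_cancel] using this
          _ = M * ‖y‖ ^ 2 := by ring
      have hden : ‖y‖ ^ 3 ≤ (‖y‖ ^ 2 + (f x - f (x - y)) ^ 2) ^ (3 / 2 : ℝ) := by
        have h1 : (‖y‖ ^ 2 : ℝ) ^ (3 / 2 : ℝ) = ‖y‖ ^ (3 : ℕ) := by
          rw [← Real.rpow_natCast ‖y‖ 2, ← Real.rpow_mul (norm_nonneg y),
            show ((2 : ℕ) : ℝ) * (3 / 2) = ((3 : ℕ) : ℝ) by norm_num,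
            Real.rpow_natCast]
        calc ‖y‖ ^ 3 = (‖y‖ ^ 2 : ℝ) ^ (3 / 2 : ℝ) := h1.symm
          _ ≤ _ := Real.rpow_le_rpow (by positivity)
              (by nlinarith [sq_nonneg (f x - f (x - y))]) (by norm_num)
      have hypow : (0 : ℝ) < ‖y‖ ^ 3 := by positivity
      calc |⟪gradient f x - gradient f (x - y), y⟫| /
              (‖y‖ ^ 2 + (f x - f (x - y)) ^ 2) ^ (3 / 2 : ℝ)
          ≤ (M * ‖y‖ ^ 2) / ‖y‖ ^ 3 :=
            div_le_div₀ (by positivity) hnum hypow hden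
        _ = M * ‖y‖⁻¹ := by field_simp
  calc (∫⁻ y in Metric.ball (0 : E2) 1, ENNReal.ofReal
          (|⟪gradient f x - gradient f (x - y), y⟫| /
            (‖y‖ ^ 2 + (f x - f (x - y)) ^ 2) ^ (3 / 2 : ℝ)))
      ≤ ∫⁻ y in Metric.ball (0 : E2) 1, ENNReal.ofReal (M * ‖y‖⁻¹) :=
        lintegral_mono fun y => ENNReal.ofReal_le_ofReal (hpt y)
    _ = ENNReal.ofReal M * I := by
        simp_rw [ENNReal.ofReal_mul hM0]
        exact lintegral_const_mul' _ _ ENNReal.ofReal_ne_top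
    _ ≤ ENNReal.ofReal M * ENNReal.ofReal (I.toReal + 1) := by
        apply mul_le_mul_right
        calc I = ENNReal.ofReal I.toReal := (ENNReal.ofReal_toReal hIlt.ne).symm
          _ ≤ ENNReal.ofReal (I.toReal + 1) := ENNReal.ofReal_le_ofReal (by linarith)
    _ = ENNReal.ofReal ((I.toReal + 1) * M) := by
        rw [← ENNReal.ofReal_mul hM0, mul_comm]
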